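/- The ring S' = F[[x,y,z]]/(z² - x², zx - x², yz) is local, and the quotient S'/(x+y)S' is isomorphic to F[[x,z]]/(z², zx, x²), which has a two-dimensional socle over F (hence S'/(x+y)S' is not Gorenstein). -/

import Mathlib

set_option synthInstance.maxHeartbeats 1000000
set_option maxHeartbeats 1000000

noncomputable section

variable (F : Type*) [Field F]

/-- The E-infinity singularity `S' = F[[x,y,z]]/(z² - x², zx - x², yz)`. -/
abbrev Einf : Type _ :=
  MvPowerSeries (Fin 3) F ⧸
    (Ideal.span
      {(MvPowerSeries.X (2 : Fin 3)) ^ 2 - (MvPowerSeries.X 0) ^ 2,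
       MvPowerSeries.X (2 : Fin 3) * MvPowerSeries.X 0 - (MvPowerSeries.X 0) ^ 2,
       MvPowerSeries.X (1 : Fin 3) * MvPowerSeries.X 2} :
      Ideal (MvPowerSeries (Fin 3) F))

/-- The image of `x` in `S'`. -/
abbrev xE : Einf F := Ideal.Quotient.mk _ (MvPowerSeries.X 0)
/-- The image of `y` in `S'`. -/
abbrev yE : Einf F := Ideal.Quotient.mk _ (MvPowerSeries.X 1)

/-- The ring `T = F[[x,z]]/(z², zx, x²)`. -/
abbrev Tring : Type _ :=
  MvPowerSeries (Fin 2) F ⧸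
    (Ideal.span
      {(MvPowerSeries.X (1 : Fin 2)) ^ 2,
       MvPowerSeries.X (1 : Fin 2) * MvPowerSeries.X 0,
       (MvPowerSeries.X (0 : Fin 2)) ^ 2} :
      Ideal (MvPowerSeries (Fin 2) F))

/-- The image of `x` in `T`. -/
abbrev xT : Tring F := Ideal.Quotient.mk _ (MvPowerSeries.X 0)
/-- The image of `z` in `T`. -/
abbrev zT : Tring F := Ideal.Quotient.mk _ (MvPowerSeries.X 1)

/-- The socle of `T`: the annihilator of the maximal ideal `(x, z)`, as an
`F`-subspace of `T`. -/
abbrev socT : Submodule F (Tring F) :=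
  LinearMap.ker (LinearMap.mulLeft F (xT F)) ⊓ LinearMap.ker (LinearMap.mulLeft F (zT F))

end

section Prelim
open MvPowerSeries TrivSqZeroExt Finsupp

variable {F : Type*} [Field F] {σ : Type*} [DecidableEq σ]

lemma coeff_single_one_mul (i : σ) (f g : MvPowerSeries σ F) :
    coeff (single i 1) (f * g) =
      constantCoeff f * coeff (single i 1) g +
        coeff (single i 1) f * constantCoeff g := by
  rw [coeff_mul, Finsupp.antidiagonal_single, Finset.sum_map]
  rw [show (Finset.HasAntidiagonal.antidiagonal (1:ℕ)) = ({(0,1),(1,0)} : Finset (ℕ × ℕ)) from rfl]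
  simp [coeff_zero_eq_constantCoeff, add_comm]

noncomputable def tF (f : MvPowerSeries σ F) : TrivSqZeroExt F (σ → F) :=
  inl (constantCoeff f) + inr (fun i => coeff (single i 1) f)

lemma tF_mul (f g : MvPowerSeries σ F) : tF (f * g) = tF f * tF g := by
  have hL : (fun i => coeff (single i 1) (f * g)) =
      (constantCoeff f) • (fun i => coeff (single i 1) g) +
        (constantCoeff g) • (fun i => coeff (single i 1) f) := by
    funext i
    simp [coeff_single_one_mul, smul_eq_mul, mul_comm]
  rw [tF, tF, tF, map_mul, hL, add_mul, mul_add, mul_add, inl_mul_inl, inl_mul_inr, inr_mul_inl,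
    inr_mul_inr, inr_add, op_smul_eq_smul]
  abel

/-- Truncation to degree ≤ 1 as an algebra hom. -/
noncomputable def truncAlg : MvPowerSeries σ F →ₐ[F] TrivSqZeroExt F (σ → F) where
  toFun := tF
  map_one' := by
    have : (fun i => coeff (single i 1) (1 : MvPowerSeries σ F)) = 0 := by
      funext i; simp [MvPowerSeries.coeff_one, Finsupp.single_eq_zero]
    rw [tF, this, map_one, inr_zero, add_zero, inl_one]
  map_mul' := tF_mul
  map_zero' := by
    show tF 0 = 0
    rw [tF, map_zero, inl_zero, zero_add, show (fun i => coeff (single i 1) (0:MvPowerSeries σ F)) = 0 by funext i; simp, inr_zero]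
  map_add' f g := by
    show tF (f+g) = tF f + tF g
    have : (fun i => coeff (single i 1) (f + g)) =
        (fun i => coeff (single i 1) f) + fun i => coeff (single i 1) g := by
      funext i; simp
    rw [tF, tF, tF, map_add, this, inl_add, inr_add]; abel
  commutes' r := by
    show tF _ = _
    have : (fun i => coeff (single i 1) ((algebraMap F (MvPowerSeries σ F)) r)) = 0 := by
      funext i
      simp [MvPowerSeries.algebraMap_apply, MvPowerSeries.coeff_C, Finsupp.single_eq_zero]
    rw [tF, this, inr_zero, add_zero, MvPowerSeries.algebraMap_apply,
      MvPowerSeries.constantCoeff_C, algebraMap_eq_inl]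
    simp

lemma truncAlg_X (i : σ) : (truncAlg (F := F) (σ := σ)) (X i) = inr (Pi.single i 1) := by
  show tF (X i) = _
  rw [tF, constantCoeff_X, inl_zero, zero_add]
  congr 1
  funext j
  rw [MvPowerSeries.coeff_X]
  by_cases h : j = i
  · subst h; simp
  · rw [if_neg (by simp [Finsupp.single_left_inj (one_ne_zero (α := ℕ)), h]),
      Pi.single_eq_of_ne h]

lemma truncAlg_apply (f : MvPowerSeries σ F) :
    (truncAlg (F := F) (σ := σ)) f =
      inl (constantCoeff f) + inr (fun i => coeff (single i 1) f) := rfl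
variable {n : ℕ}
variable {F : Type*} [Field F] {n : ℕ}

lemma mem_span_X (f : MvPowerSeries (Fin n) F) (hf : constantCoeff f = 0) :
    f ∈ Ideal.span (Set.range (X : Fin n → MvPowerSeries (Fin n) F)) := by
  classical
  set g : Fin n → MvPowerSeries (Fin n) F := fun i d =>
    if ∀ j, j < i → d j = 0 then coeff (d + single i 1) f else 0 with hg
  have key : f = ∑ i, X i * g i := by
    ext d
    rw [map_sum]
    have hco : ∀ i, coeff d (X i * g i) =
        if d i ≠ 0 ∧ ∀ j, j < i → d j = 0 then coeff d f else 0 := by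
      intro i
      rw [X, coeff_monomial_mul]
      by_cases h1 : d i = 0
      · rw [if_neg (by simpa [Finsupp.single_le_iff] using h1),
          if_neg (by simp [h1])]
      · have hle : single i 1 ≤ d := by
          rwa [Finsupp.single_le_iff, Nat.one_le_iff_ne_zero]
        rw [if_pos hle, one_mul]
        set e : Fin n →₀ ℕ := d - single i 1 with he
        have hgi : coeff e (g i) =
            if ∀ j, j < i → e j = 0 then coeff (e + single i 1) f else 0 := rfl
        have hsub : ∀ j, j < i → e j = d j := by
          intro j hj
          rw [he, Finsupp.tsub_apply, Finsupp.single_apply,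
            if_neg (fun hh : i = j => absurd hh.symm (ne_of_lt hj))]
          simp
        have hcond : (∀ j, j < i → e j = 0) ↔ (∀ j, j < i → d j = 0) := by
          constructor <;> intro h j hj
          · rw [← hsub j hj]; exact h j hj
          · rw [hsub j hj]; exact h j hj
        have hee : e + single i 1 = d := tsub_add_cancel_of_le hle
        rw [hgi, hee]
        by_cases h2 : ∀ j, j < i → d j = 0
        · rw [if_pos (hcond.mpr h2), if_pos ⟨h1, h2⟩]
        · rw [if_neg (fun hh => h2 (hcond.mp hh)), if_neg (by tauto)]
    simp_rw [hco]
    by_cases hd : d = 0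
    · subst hd
      rw [Finset.sum_eq_zero (fun i _ => by simp)]
      simp [coeff_zero_eq_constantCoeff, hf]
    · have hne : d.support.Nonempty := Finsupp.support_nonempty_iff.mpr hd
      set i₀ := d.support.min' hne with hi₀
      have h₀ : d i₀ ≠ 0 := Finsupp.mem_support_iff.mp (d.support.min'_mem hne)
      have hlt : ∀ j, j < i₀ → d j = 0 := fun j hj => by
        by_contra hc
        exact absurd (d.support.min'_le j (Finsupp.mem_support_iff.mpr hc)) (not_le.mpr hj)
      rw [Finset.sum_eq_single i₀]
      · rw [if_pos ⟨h₀, hlt⟩]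
      · intro b _ hb
        rw [if_neg]
        rintro ⟨hb1, hb2⟩
        rcases lt_trichotomy b i₀ with h | h | h
        · exact hb1 (hlt b h)
        · exact hb h
        · exact h₀ (hb2 i₀ h)
      · intro h; exact absurd (Finset.mem_univ i₀) h
  rw [key]
  exact Ideal.sum_mem _ fun i _ =>
    Ideal.mul_mem_right _ _ (Ideal.subset_span ⟨i, rfl⟩)

lemma mem_span_XX (f : MvPowerSeries (Fin n) F) (hf : constantCoeff f = 0)
    (hf1 : ∀ i, coeff (single i 1) f = 0) :
    f ∈ Ideal.span (Set.range (X : Fin n → MvPowerSeries (Fin n) F)) *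
        Ideal.span (Set.range (X : Fin n → MvPowerSeries (Fin n) F)) := by
  classical
  obtain ⟨c, hc⟩ := (Submodule.mem_span_range_iff_exists_fun _).mp (mem_span_X f hf)
  have hcc : ∀ j, constantCoeff (c j) = 0 := by
    intro j
    have := hf1 j
    rw [← hc, map_sum] at this
    have hterm : ∀ i, coeff (single j 1) (c i • X i)
        = if i = j then constantCoeff (c i) else 0 := by
      intro i
      rw [smul_eq_mul, X, coeff_mul_monomial]
      by_cases h : i = j
      · subst h
        rw [if_pos le_rfl, if_pos rfl, tsub_self, mul_one, coeff_zero_eq_constantCoeff]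
      · rw [if_neg, if_neg h]
        rw [Finsupp.single_le_iff, Finsupp.single_apply, if_neg (fun hh => h hh.symm)]
        simp
    rw [Finset.sum_congr rfl (fun i _ => hterm i), Finset.sum_ite_eq' Finset.univ j] at this
    simpa using this
  rw [← hc]
  exact Ideal.sum_mem _ fun i _ => by
    rw [smul_eq_mul]
    exact Ideal.mul_mem_mul (mem_span_X _ (hcc i)) (Ideal.subset_span ⟨i, rfl⟩)
end Prelim
section Main
open MvPowerSeries TrivSqZeroExt Finsupp

variable (F : Type*) [Field F]

/-- abbreviations matching the statement -/
noncomputable abbrev I2 : Ideal (MvPowerSeries (Fin 2) F) :=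
  Ideal.span
    {(MvPowerSeries.X (1 : Fin 2)) ^ 2,
     MvPowerSeries.X (1 : Fin 2) * MvPowerSeries.X 0,
     (MvPowerSeries.X (0 : Fin 2)) ^ 2}

noncomputable abbrev I3 : Ideal (MvPowerSeries (Fin 3) F) :=
  Ideal.span
    {(MvPowerSeries.X (2 : Fin 3)) ^ 2 - (MvPowerSeries.X 0) ^ 2,
     MvPowerSeries.X (2 : Fin 3) * MvPowerSeries.X 0 - (MvPowerSeries.X 0) ^ 2,
     MvPowerSeries.X (1 : Fin 3) * MvPowerSeries.X 2}

noncomputable abbrev KK : Ideal (MvPowerSeries (Fin 3) F) :=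
  Ideal.span
    {(MvPowerSeries.X (2 : Fin 3)) ^ 2 - (MvPowerSeries.X 0) ^ 2,
     MvPowerSeries.X (2 : Fin 3) * MvPowerSeries.X 0 - (MvPowerSeries.X 0) ^ 2,
     MvPowerSeries.X (1 : Fin 3) * MvPowerSeries.X 2,
     MvPowerSeries.X (0 : Fin 3) + MvPowerSeries.X 1}

lemma XXmem2 (i j : Fin 2) : (X i * X j : MvPowerSeries (Fin 2) F) ∈ I2 F := by
  fin_cases i <;> fin_cases j
  · rw [← pow_two]; exact Ideal.subset_span (by simp)
  · rw [mul_comm]; exact Ideal.subset_span (by simp)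
  · exact Ideal.subset_span (by simp)
  · rw [← pow_two]; exact Ideal.subset_span (by simp)

lemma XXmem3 (i j : Fin 3) : (X i * X j : MvPowerSeries (Fin 3) F) ∈ KK F := by
  have hxy : (X 0 + X 1 : MvPowerSeries (Fin 3) F) ∈ KK F := Ideal.subset_span (by simp)
  have hyz : (X 1 * X 2 : MvPowerSeries (Fin 3) F) ∈ KK F := Ideal.subset_span (by simp)
  have hzx : (X 2 * X 0 : MvPowerSeries (Fin 3) F) ∈ KK F := by
    have h : (X 2 * X 0 : MvPowerSeries (Fin 3) F) = X 2 * (X 0 + X 1) - X 1 * X 2 := by ring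
    rw [h]; exact Ideal.sub_mem _ (Ideal.mul_mem_left _ _ hxy) hyz
  have hx2 : (X 0 ^ 2 : MvPowerSeries (Fin 3) F) ∈ KK F := by
    have h : (X 0 ^ 2 : MvPowerSeries (Fin 3) F) = X 2 * X 0 - (X 2 * X 0 - X 0 ^ 2) := by ring
    rw [h]; exact Ideal.sub_mem _ hzx (Ideal.subset_span (by simp))
  have hz2 : (X 2 ^ 2 : MvPowerSeries (Fin 3) F) ∈ KK F := by
    have h : (X 2 ^ 2 : MvPowerSeries (Fin 3) F) = (X 2 ^ 2 - X 0 ^ 2) + X 0 ^ 2 := by ring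
    rw [h]; exact Ideal.add_mem _ (Ideal.subset_span (by simp)) hx2
  have hxy2 : (X 0 * X 1 : MvPowerSeries (Fin 3) F) ∈ KK F := by
    have h : (X 0 * X 1 : MvPowerSeries (Fin 3) F) = X 0 * (X 0 + X 1) - X 0 ^ 2 := by ring
    rw [h]; exact Ideal.sub_mem _ (Ideal.mul_mem_left _ _ hxy) hx2
  have hy2 : (X 1 ^ 2 : MvPowerSeries (Fin 3) F) ∈ KK F := by
    have h : (X 1 ^ 2 : MvPowerSeries (Fin 3) F) = X 1 * (X 0 + X 1) - X 0 * X 1 := by ring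
    rw [h]; exact Ideal.sub_mem _ (Ideal.mul_mem_left _ _ hxy) hxy2
  fin_cases i <;> fin_cases j
  · rw [← pow_two]; exact hx2
  · exact hxy2
  · rw [mul_comm]; exact hzx
  · rw [mul_comm]; exact hxy2
  · rw [← pow_two]; exact hy2
  · exact hyz
  · exact hzx
  · rw [mul_comm]; exact hyz
  · rw [← pow_two]; exact hz2

lemma sq_le2 :
    Ideal.span (Set.range (X : Fin 2 → MvPowerSeries (Fin 2) F)) *
      Ideal.span (Set.range (X : Fin 2 → MvPowerSeries (Fin 2) F)) ≤ I2 F := by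
  rw [Ideal.span_mul_span']
  rw [Ideal.span_le]
  rintro x ⟨a, ⟨i, rfl⟩, b, ⟨j, rfl⟩, rfl⟩
  exact XXmem2 F i j

lemma sq_le3 :
    Ideal.span (Set.range (X : Fin 3 → MvPowerSeries (Fin 3) F)) *
      Ideal.span (Set.range (X : Fin 3 → MvPowerSeries (Fin 3) F)) ≤ KK F := by
  rw [Ideal.span_mul_span']
  rw [Ideal.span_le]
  rintro x ⟨a, ⟨i, rfl⟩, b, ⟨j, rfl⟩, rfl⟩
  exact XXmem3 F i j

end Main
section Main2
open MvPowerSeries TrivSqZeroExt Finsupp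

variable (F : Type*) [Field F]

lemma truncAlg_eq_zero_iff {σ : Type*} [DecidableEq σ] (f : MvPowerSeries σ F) :
    truncAlg f = 0 ↔
      constantCoeff f = 0 ∧ ∀ i, coeff (single i 1) f = 0 := by
  rw [truncAlg_apply]
  constructor
  · intro h
    have h1 := congrArg TrivSqZeroExt.fst h
    have h2 := congrArg TrivSqZeroExt.snd h
    simp only [fst_add, fst_inl, fst_inr, add_zero, fst_zero, snd_add, snd_inl, snd_inr,
      zero_add, snd_zero] at h1 h2
    exact ⟨h1, fun i => congrFun h2 i⟩
  · rintro ⟨h1, h2⟩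
    rw [h1, inl_zero, zero_add, show (fun i => coeff (single i 1) f) = 0 from funext h2,
      inr_zero]

/-- the linear map `(v₀,v₁,v₂) ↦ (v₀ - v₁, v₂)`. -/
noncomputable def lmap : (Fin 3 → F) →ₗ[F] (Fin 2 → F) :=
  LinearMap.pi
    ![(LinearMap.proj (0 : Fin 3) : ((Fin 3) → F) →ₗ[F] F) - LinearMap.proj 1,
      (LinearMap.proj (2 : Fin 3) : ((Fin 3) → F) →ₗ[F] F)]

lemma lmap_apply (v : Fin 3 → F) (j : Fin 2) :
    lmap F v j = ![v 0 - v 1, v 2] j := by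
  fin_cases j <;> simp [lmap]

/-- The two truncation algebra homs. -/
noncomputable abbrev phi2 : MvPowerSeries (Fin 2) F →ₐ[F] TrivSqZeroExt F (Fin 2 → F) :=
  truncAlg

noncomputable abbrev phi3 : MvPowerSeries (Fin 3) F →ₐ[F] TrivSqZeroExt F (Fin 2 → F) :=
  (TrivSqZeroExt.map (lmap F)).comp truncAlg

lemma ker2 : RingHom.ker (phi2 F) = I2 F := by
  ext f
  rw [RingHom.mem_ker]
  constructor
  · intro h
    obtain ⟨h0, h1⟩ := (truncAlg_eq_zero_iff F f).mp h
    exact sq_le2 F (mem_span_XX f h0 h1)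
  · intro hf
    have hle : I2 F ≤ RingHom.ker (phi2 F) := by
      rw [Ideal.span_le]
      rintro g hg
      simp only [Set.mem_insert_iff, Set.mem_singleton_iff] at hg
      rcases hg with rfl | rfl | rfl <;>
        simp [SetLike.mem_coe, RingHom.mem_ker, map_pow, map_mul, truncAlg_X, sq, inr_mul_inr]
    exact RingHom.mem_ker.mp (hle hf)

lemma phi3_eq_zero_iff (f : MvPowerSeries (Fin 3) F) :
    phi3 F f = 0 ↔
      constantCoeff f = 0 ∧
        coeff (single (0 : Fin 3) 1) f = coeff (single (1 : Fin 3) 1) f ∧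
        coeff (single (2 : Fin 3) 1) f = 0 := by
  rw [AlgHom.comp_apply, truncAlg_apply, map_add, TrivSqZeroExt.map_inl, TrivSqZeroExt.map_inr]
  constructor
  · intro h
    have h1 := congrArg TrivSqZeroExt.fst h
    have h2 := congrArg TrivSqZeroExt.snd h
    simp only [fst_add, fst_inl, fst_inr, add_zero, fst_zero, snd_add, snd_inl, snd_inr,
      zero_add, snd_zero] at h1 h2
    have h20 := congrFun h2 0
    have h21 := congrFun h2 1
    rw [lmap_apply] at h20 h21
    simp only [Matrix.cons_val_zero, Matrix.cons_val_one, Matrix.head_cons,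
      Pi.zero_apply] at h20 h21
    exact ⟨h1, sub_eq_zero.mp h20, h21⟩
  · rintro ⟨h1, h2, h3⟩
    rw [h1, inl_zero, zero_add]
    have : lmap F (fun i => coeff (single i 1) f) = 0 := by
      funext j
      rw [lmap_apply]
      fin_cases j <;> simp [h2, h3]
    rw [this, inr_zero]

lemma ker3 : RingHom.ker (phi3 F) = KK F := by
  ext f
  rw [RingHom.mem_ker]
  constructor
  · intro h
    obtain ⟨h0, h1, h2⟩ := (phi3_eq_zero_iff F f).mp h
    set t := coeff (single (0 : Fin 3) 1) f with ht
    have hdecomp : f = (f - t • (X 0 + X 1)) + t • (X 0 + X 1) := by ring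
    rw [hdecomp]
    have hxy : (X 0 + X 1 : MvPowerSeries (Fin 3) F) ∈ KK F := Ideal.subset_span (by simp)
    refine Ideal.add_mem _ ?_ (Submodule.smul_of_tower_mem _ t hxy)
    refine sq_le3 F (mem_span_XX _ ?_ ?_)
    · simp [map_sub, h0, ← coeff_zero_eq_constantCoeff, MvPowerSeries.coeff_smul, map_add, constantCoeff_X, MvPowerSeries.coeff_zero_X]
    · intro i
      have hX : ∀ (i j : Fin 3), coeff (single i 1) (X j : MvPowerSeries (Fin 3) F)
          = if i = j then 1 else 0 := by
        intro i j
        rw [MvPowerSeries.coeff_X]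
        by_cases h : i = j
        · subst h; simp
        · rw [if_neg (by simp [Finsupp.single_left_inj (one_ne_zero (α := ℕ)), h]), if_neg h]
      fin_cases i <;>
        simp only [map_sub, map_smul, map_add, hX] <;>
        simp [← ht, h1, h2]
  · intro hf
    have hXmul : ∀ i j : Fin 3, phi3 F (X i * X j) = 0 := by
      intro i j
      simp [AlgHom.comp_apply, map_mul, truncAlg_X, inr_mul_inr]
    have hle : KK F ≤ RingHom.ker (phi3 F) := by
      rw [Ideal.span_le]
      rintro g hg
      simp only [Set.mem_insert_iff, Set.mem_singleton_iff] at hg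
      rcases hg with rfl | rfl | rfl | rfl
      · simp only [SetLike.mem_coe, RingHom.mem_ker, map_sub, sq, hXmul, sub_zero]
      · simp only [SetLike.mem_coe, RingHom.mem_ker, map_sub, sq, hXmul, sub_zero]
      · simp only [SetLike.mem_coe, RingHom.mem_ker, hXmul]
      · simp only [SetLike.mem_coe, RingHom.mem_ker, map_add, AlgHom.comp_apply, truncAlg_X,
          TrivSqZeroExt.map_inr, ← inr_add]
        rw [show lmap F (Pi.single 0 1) + lmap F (Pi.single 1 1) = 0 by
          funext j; rw [Pi.add_apply, lmap_apply, lmap_apply]; fin_cases j <;> simp, inr_zero]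
    exact RingHom.mem_ker.mp (hle hf)

lemma truncAlg_surj {σ : Type*} [Fintype σ] [DecidableEq σ] :
    Function.Surjective (truncAlg (F := F) (σ := σ)) := by
  intro p
  refine ⟨algebraMap F _ (fst p) + ∑ i, (snd p i) • X i, ?_⟩
  rw [map_add, AlgHom.commutes, map_sum]
  simp only [map_smul, truncAlg_X]
  have h1 : ∀ i : σ, snd p i • (inr (Pi.single i 1) : TrivSqZeroExt F (σ → F))
      = (inrHom F (σ → F)) (Pi.single i (snd p i)) := by
    intro i
    rw [inrHom_apply, ← inr_smul]
    congr 1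
    funext j
    by_cases h : j = i
    · subst h; simp
    · simp [Pi.single_eq_of_ne h]
  simp only [h1]
  rw [← map_sum, Finset.univ_sum_single, inrHom_apply, TrivSqZeroExt.algebraMap_eq_inl]
  exact inl_fst_add_inr_snd_eq p

lemma phi2_surj : Function.Surjective (phi2 F) := truncAlg_surj F

end Main2
section Main3
open MvPowerSeries TrivSqZeroExt Finsupp

variable (F : Type*) [Field F]

lemma map_lmap_surj : Function.Surjective (TrivSqZeroExt.map (lmap F)) := by
  intro p
  refine ⟨inl (fst p) + inr ![snd p 0, 0, snd p 1], ?_⟩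
  rw [map_add, TrivSqZeroExt.map_inl, TrivSqZeroExt.map_inr]
  have : lmap F ![snd p 0, 0, snd p 1] = snd p := by
    funext j
    rw [lmap_apply]
    fin_cases j <;> simp
  rw [this]
  exact inl_fst_add_inr_snd_eq p

lemma phi3_surj : Function.Surjective (phi3 F) :=
  (map_lmap_surj F).comp (truncAlg_surj F)

end Main3
section Main4
open MvPowerSeries TrivSqZeroExt Finsupp

variable (F : Type*) [Field F]

noncomputable def e2 : (MvPowerSeries (Fin 2) F ⧸ I2 F) ≃ₐ[F] TrivSqZeroExt F (Fin 2 → F) :=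
  (Ideal.quotientEquivAlgOfEq F (ker2 F).symm).trans
    (Ideal.quotientKerAlgEquivOfSurjective (phi2_surj F))

noncomputable def e3 : (MvPowerSeries (Fin 3) F ⧸ KK F) ≃ₐ[F] TrivSqZeroExt F (Fin 2 → F) :=
  (Ideal.quotientEquivAlgOfEq F (ker3 F).symm).trans
    (Ideal.quotientKerAlgEquivOfSurjective (phi3_surj F))

lemma e2_mk (f : MvPowerSeries (Fin 2) F) :
    e2 F (Ideal.Quotient.mk (I2 F) f) = phi2 F f := by
  rw [e2, AlgEquiv.trans_apply, Ideal.quotientEquivAlgOfEq_mk]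
  rfl

lemma I3_le_KK : I3 F ≤ KK F := by
  rw [Ideal.span_le]
  intro g hg
  simp only [Set.mem_insert_iff, Set.mem_singleton_iff] at hg
  rcases hg with rfl | rfl | rfl <;> exact Ideal.subset_span (by simp)

lemma I3_ne_top : I3 F ≠ ⊤ := by
  intro h
  have h1 : (1 : MvPowerSeries (Fin 3) F) ∈ KK F :=
    I3_le_KK F (h ▸ Submodule.mem_top)
  rw [← ker3 F, RingHom.mem_ker, map_one] at h1
  exact one_ne_zero h1

lemma locEinf : IsLocalRing (MvPowerSeries (Fin 3) F ⧸ I3 F) := by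
  have : Nontrivial (MvPowerSeries (Fin 3) F ⧸ I3 F) := Ideal.Quotient.nontrivial_iff.mpr (I3_ne_top F)
  exact IsLocalRing.of_surjective' (Ideal.Quotient.mk (I3 F)) Ideal.Quotient.mk_surjective

lemma hsup : I3 F ⊔ Ideal.span {(X 0 : MvPowerSeries (Fin 3) F) + X 1} = KK F := by
  rw [← Ideal.span_union]
  congr 1
  ext g
  simp only [Set.union_singleton, Set.mem_insert_iff, Set.mem_singleton_iff]
  tauto

/-- A2-side: `inr v * p = inr (fst p • v)`. -/
lemma inr_mul' (v : Fin 2 → F) (p : TrivSqZeroExt F (Fin 2 → F)) :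
    inr v * p = inr (fst p • v) := by
  rw [← inl_fst_add_inr_snd_eq p, mul_add, inr_mul_inr, add_zero, inr_mul_inl,
    op_smul_eq_smul]
  congr 1
  rw [fst_add, fst_inl, fst_inr, add_zero]

end Main4
noncomputable section

variable (F : Type*) [Field F]

open MvPowerSeries TrivSqZeroExt Finsupp

theorem stmt11 :
    IsLocalRing (Einf F) ∧
    Nonempty ((Einf F ⧸ (Ideal.span {xE F + yE F} : Ideal (Einf F))) ≃ₐ[F] Tring F) ∧
    Module.finrank F (socT F) = 2 := by
  refine ⟨locEinf F, ⟨?_⟩, ?_⟩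
  · -- the isomorphism
    have hspan : (Ideal.span {xE F + yE F} : Ideal (Einf F)) =
        Ideal.map (Ideal.Quotient.mkₐ F (I3 F))
          (Ideal.span {(X 0 : MvPowerSeries (Fin 3) F) + X 1}) := by
      rw [Ideal.map_span, Set.image_singleton, map_add]
      rfl
    exact (Ideal.quotientEquivAlgOfEq F hspan).trans
      ((DoubleQuot.quotQuotEquivQuotSupₐ F (I3 F)
          (Ideal.span {(X 0 : MvPowerSeries (Fin 3) F) + X 1})).trans
        ((Ideal.quotientEquivAlgOfEq F (hsup F)).trans ((e3 F).trans (e2 F).symm)))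
  · -- the socle dimension
    have key : ∀ (v : Fin 2 → F) (w : Tring F) (p : TrivSqZeroExt F (Fin 2 → F)),
        e2 F w = inr v → (w * (e2 F).symm p = 0 ↔ fst p • v = 0) := by
      intro v w p hw
      rw [← EmbeddingLike.map_eq_zero_iff (f := (e2 F)), map_mul, hw,
        AlgEquiv.apply_symm_apply, inr_mul', ← inr_zero (R := F) (M := Fin 2 → F)]
      exact inr_injective.eq_iff
    have hxe : e2 F (xT F) = inr (Pi.single 0 1) := by
      rw [show xT F = Ideal.Quotient.mk (I2 F) (X 0) from rfl, e2_mk, truncAlg_X]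
    have hze : e2 F (zT F) = inr (Pi.single 1 1) := by
      rw [show zT F = Ideal.Quotient.mk (I2 F) (X 1) from rfl, e2_mk, truncAlg_X]
    have heq : Submodule.map ((e2 F).toLinearEquiv :
          Tring F →ₗ[F] TrivSqZeroExt F (Fin 2 → F)) (socT F) =
        LinearMap.ker (fstHom F F (Fin 2 → F)).toLinearMap := by
      ext p
      rw [Submodule.mem_map_equiv, Submodule.mem_inf, LinearMap.mem_ker, LinearMap.mem_ker,
        LinearMap.mulLeft_apply, LinearMap.mulLeft_apply, LinearMap.mem_ker]
      have h1 := key (Pi.single 0 1) (xT F) p hxe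
      have h2 := key (Pi.single 1 1) (zT F) p hze
      rw [show ((e2 F).toLinearEquiv).symm p = (e2 F).symm p from rfl] at *
      rw [h1, h2]
      constructor
      · rintro ⟨ha, -⟩
        have := congrFun ha 0
        simpa using this
      · intro h
        have h0 : fst p = 0 := h
        rw [h0, zero_smul, zero_smul]
        exact ⟨rfl, rfl⟩
    have hrk1 : Module.finrank F (socT F) =
        Module.finrank F (Submodule.map ((e2 F).toLinearEquiv :
          Tring F →ₗ[F] TrivSqZeroExt F (Fin 2 → F)) (socT F)) :=
      (LinearEquiv.finrank_map_eq (e2 F).toLinearEquiv (socT F)).symm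
    have hker : LinearMap.ker (fstHom F F (Fin 2 → F)).toLinearMap =
        LinearMap.range (inrHom F (Fin 2 → F)) := by
      ext p
      rw [LinearMap.mem_ker, LinearMap.mem_range]
      constructor
      · intro h
        have h0 : fst p = 0 := h
        exact ⟨snd p, TrivSqZeroExt.ext (by rw [inrHom_apply, fst_inr, h0]) (by rw [inrHom_apply, snd_inr])⟩
      · rintro ⟨m, rfl⟩
        simp [inrHom_apply]
    rw [hrk1, heq, hker,
      ← LinearEquiv.finrank_eq (LinearEquiv.ofInjective (inrHom F (Fin 2 → F)) inr_injective),
      Module.finrank_pi]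
    simp
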